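/- π ∫₀^∞ 1/(e^x + 1) dx = (1/2) ∫₀^π (y·sin y)/(1 − cos y) dy; equivalently, ∫₀^π (y·sin y)/(1 − cos y) dy = 2π·log 2. -/

import Mathlib

open scoped Real
open MeasureTheory intervalIntegral Set Filter Topology


-- Step C: the Ioi integral
lemma exp_integral : (∫ x in Set.Ioi (0 : ℝ), 1 / (Real.exp x + 1)) = Real.log 2 := by
  have hd : ∀ x ∈ Set.Ioi (0:ℝ), HasDerivAt (fun x => x - Real.log (Real.exp x + 1))
      (1 / (Real.exp x + 1)) x := by
    intro x _
    have h1 : (0:ℝ) < Real.exp x + 1 := by positivity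
    have := ((Real.hasDerivAt_exp x).add_const 1).log h1.ne'
    have h2 := (hasDerivAt_id x).sub this
    convert h2 using 1 <;> try rfl
    field_simp
    ring
  have hpos : ∀ x ∈ Set.Ioi (0:ℝ), 0 ≤ 1 / (Real.exp x + 1) := by
    intro x _; positivity
  have heq : (fun x : ℝ => x - Real.log (Real.exp x + 1))
      = fun x => -Real.log (1 + Real.exp (-x)) := by
    funext x
    have : Real.exp x + 1 = Real.exp x * (1 + Real.exp (-x)) := by
      rw [mul_add, mul_one, ← Real.exp_add]; simp
    rw [this, Real.log_mul (Real.exp_pos x).ne' (by positivity), Real.log_exp]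
    ring
  have htend : Tendsto (fun x : ℝ => x - Real.log (Real.exp x + 1)) atTop (𝓝 0) := by
    rw [heq]
    have : Tendsto (fun x : ℝ => 1 + Real.exp (-x)) atTop (𝓝 1) := by
      simpa using tendsto_const_nhds.add Real.tendsto_exp_neg_atTop_nhds_zero
    have := (Real.continuousAt_log (by norm_num : (1:ℝ) ≠ 0)).tendsto.comp this
    simpa using this.neg
  have hcont : ContinuousWithinAt (fun x : ℝ => x - Real.log (Real.exp x + 1)) (Set.Ici 0) 0 := by
    apply Continuous.continuousWithinAt
    exact continuous_id.sub ((Real.continuous_exp.add continuous_const).log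
      (fun x => (by positivity : Real.exp x + 1 ≠ 0)))
  have := integral_Ioi_of_hasDerivAt_of_nonneg hcont hd hpos htend
  rw [this]
  norm_num


lemma il_log01 : IntervalIntegrable Real.log volume 0 1 := by
  have h : IntervalIntegrable (fun x => -Real.log x) volume 0 1 := by
    apply intervalIntegrable_deriv_of_nonneg (g := fun x => x - x * Real.log x)
    · exact (continuous_id.sub Real.continuous_mul_log).continuousOn
    · intro x hx
      simp only [min_def, max_def] at hx
      norm_num at hx
      have hx0 : x ≠ 0 := ne_of_gt hx.1
      have h1 : HasDerivAt (fun y : ℝ => y * Real.log y) (Real.log x + 1) x := by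
        have := (hasDerivAt_id x).mul (Real.hasDerivAt_log hx0)
        convert this using 1 <;> try rfl
        field_simp
        simp only [id]; ring
      have := (hasDerivAt_id x).sub h1
      convert this using 1 <;> try rfl
      ring
    · intro x hx
      simp only [min_def, max_def] at hx
      norm_num at hx
      simp only [neg_nonneg]
      exact Real.log_nonpos hx.1.le hx.2.le
  have heq : Real.log = fun x : ℝ => -(-Real.log x) := by funext x; ring
  rw [heq]
  exact h.neg

lemma il_log (b : ℝ) (hb : 0 < b) : IntervalIntegrable Real.log volume 0 b := by
  rcases le_total b 1 with h | h
  · exact il_log01.mono_set (by rw [Set.uIcc_of_le hb.le, Set.uIcc_of_le zero_le_one]; exact Set.Icc_subset_Icc le_rfl h)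
  · refine il_log01.trans ?_
    apply ContinuousOn.intervalIntegrable
    apply Real.continuousOn_log.mono
    intro x hx
    rw [Set.uIcc_of_le h] at hx
    simp only [Set.mem_compl_iff, Set.mem_singleton_iff]
    exact ne_of_gt (lt_of_lt_of_le one_pos hx.1)

-- interval integrability of log ∘ sin on [0, π/2]
lemma il_logsin : IntervalIntegrable (fun x => Real.log (Real.sin x)) volume 0 (π/2) := by
  have hπ : (0:ℝ) < π / 2 := by positivity
  have hmaj : IntervalIntegrable (fun x => ‖Real.log x‖ + Real.log (π/2)) volume 0 (π/2) :=
    (il_log _ hπ).norm.add intervalIntegrable_const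
  apply hmaj.mono_fun'
  · exact ((Real.measurable_log.comp Real.measurable_sin).aestronglyMeasurable)
  · rw [Set.uIoc_of_le hπ.le]
    filter_upwards [ae_restrict_mem measurableSet_Ioc] with x hx
    have hx0 : 0 < x := hx.1
    have hx2 : x ≤ π / 2 := hx.2
    have hsin_pos : 0 < Real.sin x := Real.sin_pos_of_pos_of_lt_pi hx0 (lt_of_le_of_lt hx2 (by linarith [Real.pi_pos]))
    have hlow : 2 / π * x ≤ Real.sin x := Real.mul_le_sin hx0.le hx2
    have h2 : Real.log (2 / π * x) ≤ Real.log (Real.sin x) :=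
      Real.log_le_log (by positivity) hlow
    have h3 : Real.log (Real.sin x) ≤ 0 := Real.log_nonpos hsin_pos.le (Real.sin_le_one x)
    have h4 : Real.log (2 / π * x) = Real.log x - Real.log (π / 2) := by
      rw [Real.log_mul (by positivity) hx0.ne', Real.log_div two_ne_zero Real.pi_ne_zero]
      have := Real.log_div Real.pi_ne_zero two_ne_zero
      rw [this]; ring
    simp only [Real.norm_eq_abs]
    rw [abs_of_nonpos h3]
    have h5 : -Real.log (Real.sin x) ≤ -(Real.log x - Real.log (π/2)) := by
      rw [h4] at h2; linarith
    calc -Real.log (Real.sin x) ≤ -Real.log x + Real.log (π/2) := by linarith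
    _ ≤ |Real.log x| + Real.log (π/2) := by
        have := neg_abs_le (Real.log x); linarith [le_abs_self (Real.log x), neg_le_abs (Real.log x)]


-- integrability on [π/2, π]
lemma il_logsin' : IntervalIntegrable (fun x => Real.log (Real.sin x)) volume (π/2) π := by
  have h := (il_logsin.comp_sub_left π).symm
  have heq : (fun x => Real.log (Real.sin (π - x))) = fun x => Real.log (Real.sin x) := by
    funext x; rw [Real.sin_pi_sub]
  rw [heq] at h
  have : π - 0 = π := by ring
  have h2 : π - π/2 = π/2 := by ring
  rw [this, h2] at h
  exact h

lemma il_logsin_pi : IntervalIntegrable (fun x => Real.log (Real.sin x)) volume 0 π :=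
  il_logsin.trans il_logsin'

-- integrability of log (cos x) on [0, π/2]
lemma il_logcos : IntervalIntegrable (fun x => Real.log (Real.cos x)) volume 0 (π/2) := by
  have h := (il_logsin.comp_sub_left (π/2)).symm
  have heq : (fun x => Real.log (Real.sin (π/2 - x))) = fun x => Real.log (Real.cos x) := by
    funext x; rw [Real.sin_pi_div_two_sub]
  rw [heq] at h
  have h1 : π/2 - 0 = π/2 := by ring
  have h2 : π/2 - π/2 = 0 := by ring
  rw [h1, h2] at h
  exact h

-- ∫₀^{π/2} log cos = ∫₀^{π/2} log sin
lemma logcos_eq_logsin :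
    (∫ x in (0:ℝ)..(π/2), Real.log (Real.cos x)) = ∫ x in (0:ℝ)..(π/2), Real.log (Real.sin x) := by
  have := integral_comp_sub_left (a := (0:ℝ)) (b := π/2) (fun x => Real.log (Real.sin x)) (π/2)
  simp only [sub_zero, sub_self] at this
  rw [← this]
  congr 1
  funext x
  rw [Real.sin_pi_div_two_sub]

-- ∫_{π/2}^π log sin = ∫₀^{π/2} log sin
lemma logsin_upper :
    (∫ x in (π/2:ℝ)..π, Real.log (Real.sin x)) = ∫ x in (0:ℝ)..(π/2), Real.log (Real.sin x) := by
  have := integral_comp_sub_left (a := (0:ℝ)) (b := π/2) (fun x => Real.log (Real.sin x)) π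
  have h1 : π - 0 = π := by ring
  have h2 : π - π/2 = π/2 := by ring
  rw [h1, h2] at this
  rw [← this]
  congr 1
  funext x
  rw [Real.sin_pi_sub]

-- ∫₀^{π/2} log sin 2x = (1/2) ∫₀^π log sin
lemma logsin_double :
    (∫ x in (0:ℝ)..(π/2), Real.log (Real.sin (2*x)))
      = (2:ℝ)⁻¹ • ∫ x in (0:ℝ)..π, Real.log (Real.sin x) := by
  have := integral_comp_mul_left (a := (0:ℝ)) (b := π/2) (c := 2)
    (fun x => Real.log (Real.sin x)) two_ne_zero
  rw [this]
  have h2 : 2 * (π/2) = π := by ring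
  rw [h2]
  norm_num

lemma integral_log_sin : (∫ x in (0:ℝ)..(π/2), Real.log (Real.sin x)) = -(π/2) * Real.log 2 := by
  set J := ∫ x in (0:ℝ)..(π/2), Real.log (Real.sin x) with hJ
  have hpi : (0:ℝ) < π/2 := by positivity
  -- ∫₀^π log sin = 2J
  have hfull : (∫ x in (0:ℝ)..π, Real.log (Real.sin x)) = 2 * J := by
    rw [← intervalIntegral.integral_add_adjacent_intervals il_logsin il_logsin', logsin_upper]
    ring
  -- a.e. equality of log sin + log cos with log sin 2x - log 2 on Ioc 0 (π/2)
  have hae : (∫ x in (0:ℝ)..(π/2), (Real.log (Real.sin x) + Real.log (Real.cos x)))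
      = ∫ x in (0:ℝ)..(π/2), (Real.log (Real.sin (2*x)) - Real.log 2) := by
    apply intervalIntegral.integral_congr_ae
    have hne : ∀ᵐ x : ℝ, x ≠ π/2 := by
      refine (Filter.Eventually.filter_mono (ae_mono le_rfl)) ?_
      exact (compl_mem_ae_iff.mpr (measure_singleton _) : ∀ᵐ x : ℝ, x ∈ ({π/2}ᶜ : Set ℝ))
    filter_upwards [hne] with x hne' hx
    rw [Set.uIoc_of_le hpi.le] at hx
    have hx0 : 0 < x := hx.1
    have hx2 : x < π/2 := lt_of_le_of_ne hx.2 hne'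
    have hs : 0 < Real.sin x := Real.sin_pos_of_pos_of_lt_pi hx0 (by linarith [Real.pi_pos])
    have hc : 0 < Real.cos x := Real.cos_pos_of_mem_Ioo ⟨by linarith, hx2⟩
    rw [← Real.log_mul hs.ne' hc.ne']
    rw [Real.sin_two_mul]
    rw [mul_assoc, Real.log_mul two_ne_zero (by positivity)]
    ring
  -- now combine
  have hsplit : (∫ x in (0:ℝ)..(π/2), (Real.log (Real.sin x) + Real.log (Real.cos x))) = 2 * J := by
    rw [intervalIntegral.integral_add il_logsin il_logcos, logcos_eq_logsin, ← hJ]; ring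
  have hsplit2 : (∫ x in (0:ℝ)..(π/2), (Real.log (Real.sin (2*x)) - Real.log 2))
      = J - (π/2) * Real.log 2 := by
    have hil2 : IntervalIntegrable (fun x => Real.log (Real.sin (2*x))) volume 0 (π/2) := by
      have := il_logsin_pi.comp_mul_left (c := 2)
      norm_num at this
      convert this using 2
    rw [intervalIntegral.integral_sub hil2 intervalIntegrable_const, logsin_double, hfull]
    rw [intervalIntegral.integral_const]
    simp
  rw [hae, hsplit2] at hsplit
  linarith


lemma il_logsin_half : IntervalIntegrable (fun y => Real.log (Real.sin (y/2))) volume 0 π := by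
  have := il_logsin.comp_mul_right (c := (1/2 : ℝ))
  norm_num at this
  convert this using 2 with y
  · congr 1; ring
  · ring

lemma integral_logsin_half :
    (∫ y in (0:ℝ)..π, Real.log (Real.sin (y/2))) = -π * Real.log 2 := by
  have := integral_comp_div (a := (0:ℝ)) (b := π) (c := 2)
    (fun x => Real.log (Real.sin x)) two_ne_zero
  rw [this]
  norm_num [integral_log_sin]
  ring

-- pointwise identity on (0, π]
lemma one_sub_cos_eq (y : ℝ) (hy : y ∈ Set.Ioc 0 π) :
    Real.log (1 - Real.cos y) = Real.log 2 + 2 * Real.log (Real.sin (y/2)) := by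
  have h1 : 1 - Real.cos y = 2 * Real.sin (y/2)^2 := by
    have h0 : Real.cos y = 2 * Real.cos (y/2)^2 - 1 := by
      rw [← Real.cos_two_mul]; ring_nf
    have h2 := Real.sin_sq_add_cos_sq (y/2)
    nlinarith
  have hs : 0 < Real.sin (y/2) := by
    apply Real.sin_pos_of_pos_of_lt_pi (by linarith [hy.1])
    have := hy.2; linarith [Real.pi_pos]
  rw [h1, Real.log_mul two_ne_zero (by positivity), Real.log_pow]
  push_cast
  ring

lemma il_logonesubcos : IntervalIntegrable (fun y => Real.log (1 - Real.cos y)) volume 0 π := by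
  have hmaj : IntervalIntegrable (fun y => Real.log 2 + 2 * Real.log (Real.sin (y/2))) volume 0 π :=
    intervalIntegrable_const.add (il_logsin_half.const_mul 2)
  apply IntervalIntegrable.congr_ae hmaj
  rw [Set.uIoc_of_le Real.pi_pos.le]
  filter_upwards [ae_restrict_mem measurableSet_Ioc] with y hy
  exact (one_sub_cos_eq y hy).symm

lemma integral_logonesubcos :
    (∫ y in (0:ℝ)..π, Real.log (1 - Real.cos y)) = -π * Real.log 2 := by
  have hcongr : (∫ y in (0:ℝ)..π, Real.log (1 - Real.cos y))
      = ∫ y in (0:ℝ)..π, (Real.log 2 + 2 * Real.log (Real.sin (y/2))) := by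
    apply intervalIntegral.integral_congr_ae
    filter_upwards with y hy
    rw [Set.uIoc_of_le Real.pi_pos.le] at hy
    exact one_sub_cos_eq y hy
  rw [hcongr, intervalIntegral.integral_add intervalIntegrable_const (il_logsin_half.const_mul 2),
    intervalIntegral.integral_const_mul, integral_logsin_half, intervalIntegral.integral_const]
  simp
  ring


noncomputable def ff : ℝ → ℝ := fun y => y * Real.sin y / (1 - Real.cos y)
noncomputable def FF : ℝ → ℝ := fun y => y * Real.log (1 - Real.cos y)

lemma onesubcos_pos {y : ℝ} (hy0 : 0 < y) (hy1 : y ≤ π) : 0 < 1 - Real.cos y := by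
  have h := Real.cos_le_one_sub_mul_cos_sq (x := y) (by rw [abs_of_nonneg hy0.le]; exact hy1)
  have hπ := Real.pi_pos
  have : 0 < 2 / π^2 * y^2 := by positivity
  linarith

lemma onesubcos_lb {y : ℝ} (hy0 : 0 ≤ y) (hy1 : y ≤ π) :
    2 / π^2 * y^2 ≤ 1 - Real.cos y := by
  have h := Real.cos_le_one_sub_mul_cos_sq (x := y) (by rw [abs_of_nonneg hy0]; exact hy1)
  linarith

lemma ff_bound {y : ℝ} (hy : y ∈ Set.Ioc 0 π) : ‖ff y‖ ≤ π^2/2 := by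
  have hy0 := hy.1
  have hy1 := hy.2
  have hpos := onesubcos_pos hy0 hy1
  have hsin : 0 ≤ Real.sin y := Real.sin_nonneg_of_nonneg_of_le_pi hy0.le hy1
  have hsiny : Real.sin y ≤ y := Real.sin_le hy0.le
  have hlb := onesubcos_lb hy0.le hy1
  have hf0 : 0 ≤ ff y := by
    unfold ff; positivity
  rw [Real.norm_eq_abs, abs_of_nonneg hf0]
  unfold ff
  rw [div_le_iff₀ hpos]
  have hπ := Real.pi_pos
  have hkey : π^2/2 * (2/π^2 * y^2) = y^2 := by field_simp
  calc y * Real.sin y ≤ y * y := by nlinarith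
  _ = π^2/2 * (2/π^2 * y^2) := by rw [hkey]; ring
  _ ≤ π^2/2 * (1 - Real.cos y) := by nlinarith

lemma il_ff : IntervalIntegrable ff volume 0 π := by
  apply IntervalIntegrable.mono_fun' (g := fun _ => π^2/2) intervalIntegrable_const
  · apply Measurable.aestronglyMeasurable
    exact ((measurable_id.mul Real.measurable_sin).div
      (measurable_const.sub Real.measurable_cos))
  · rw [Set.uIoc_of_le Real.pi_pos.le]
    filter_upwards [ae_restrict_mem measurableSet_Ioc] with y hy
    exact ff_bound hy



lemma FF_cont : ContinuousOn FF (Set.Icc 0 π) := by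
  intro x hx
  rcases eq_or_ne x 0 with rfl | hx0
  · -- continuity at 0 via squeeze
    have hFF0 : FF 0 = 0 := by simp [FF]
    unfold ContinuousWithinAt
    rw [hFF0]
    set g : ℝ → ℝ := fun y =>
      y * Real.log 2 + 2*π * ‖Real.sin (y/2) * Real.log (Real.sin (y/2))‖ with hg
    have hgcont : Continuous g := by
      apply Continuous.add
      · exact continuous_id.mul continuous_const
      · apply continuous_const.mul
        apply Continuous.norm
        exact Real.continuous_mul_log.comp (Real.continuous_sin.comp (continuous_id.div_const 2))
    have hg0 : g 0 = 0 := by simp [hg]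
    have hgt : Tendsto g (𝓝[Set.Icc 0 π] 0) (𝓝 0) := by
      have := hgcont.continuousAt (x := (0:ℝ))
      rw [ContinuousAt, hg0] at this
      exact this.mono_left nhdsWithin_le_nhds
    apply squeeze_zero_norm' ?_ hgt
    filter_upwards [eventually_mem_nhdsWithin] with y hy
    rcases eq_or_ne y 0 with rfl | hy0
    · simp [FF, hg]
    · have hy0' : 0 < y := lt_of_le_of_ne hy.1 (Ne.symm hy0)
      have hy1 : y ≤ π := hy.2
      have hs : 0 < Real.sin (y/2) := by
        apply Real.sin_pos_of_pos_of_lt_pi (by linarith)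
        linarith [Real.pi_pos]
      have hsle : y / π ≤ Real.sin (y/2) := by
        have := Real.mul_le_sin (x := y/2) (by linarith) (by linarith)
        calc y / π = 2/π * (y/2) := by ring
        _ ≤ Real.sin (y/2) := this
      have hππ := Real.pi_pos
      have hylog : y ≤ π * Real.sin (y/2) := by
        rw [div_le_iff₀ hππ] at hsle; linarith [hsle]
      have heq : FF y = y * Real.log 2 + 2 * (y * Real.log (Real.sin (y/2))) := by
        rw [FF, one_sub_cos_eq y ⟨hy0', hy1⟩]; ring
      rw [heq]
      have hb1 : ‖y * Real.log (Real.sin (y/2))‖ ≤ π * ‖Real.sin (y/2) * Real.log (Real.sin (y/2))‖ := by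
        rw [norm_mul, norm_mul, Real.norm_eq_abs y, abs_of_nonneg hy0'.le, ← mul_assoc]
        apply mul_le_mul_of_nonneg_right _ (norm_nonneg _)
        rw [Real.norm_eq_abs, abs_of_nonneg hs.le]
        linarith
      calc ‖y * Real.log 2 + 2 * (y * Real.log (Real.sin (y/2)))‖
          ≤ ‖y * Real.log 2‖ + ‖2 * (y * Real.log (Real.sin (y/2)))‖ := norm_add_le _ _
      _ ≤ y * Real.log 2 + 2*π * ‖Real.sin (y/2) * Real.log (Real.sin (y/2))‖ := by
          rw [norm_mul, norm_mul]
          have h2 : ‖(2:ℝ)‖ = 2 := by norm_num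
          rw [h2]
          have hl2 : ‖Real.log 2‖ = Real.log 2 := by
            rw [Real.norm_eq_abs, abs_of_nonneg (Real.log_nonneg one_le_two)]
          rw [hl2, Real.norm_eq_abs y, abs_of_nonneg hy0'.le]
          nlinarith [hb1, norm_nonneg (Real.sin (y/2) * Real.log (Real.sin (y/2)))]
      _ = g y := rfl
  · have hx0' : 0 < x := lt_of_le_of_ne hx.1 (Ne.symm hx0)
    apply ContinuousAt.continuousWithinAt
    have hne : 1 - Real.cos x ≠ 0 := (onesubcos_pos hx0' hx.2).ne'
    apply ContinuousAt.mul continuousAt_id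
    exact ((continuous_const.sub Real.continuous_cos).continuousAt).log hne

lemma FF_deriv {x : ℝ} (hx : x ∈ Set.Ioo 0 π) :
    HasDerivAt FF (Real.log (1 - Real.cos x) + ff x) x := by
  have hne : 1 - Real.cos x ≠ 0 := (onesubcos_pos hx.1 hx.2.le).ne'
  have h1 : HasDerivAt (fun y : ℝ => 1 - Real.cos y) (Real.sin x) x := by
    simpa using (Real.hasDerivAt_cos x).const_sub 1
  have h2 : HasDerivAt (fun y => Real.log (1 - Real.cos y)) (Real.sin x / (1 - Real.cos x)) x :=
    h1.log hne
  have h3 := (hasDerivAt_id x).mul h2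
  convert h3 using 1 <;> try rfl
  unfold ff
  field_simp
  simp only [id]; ring

lemma integral_ff : (∫ y in (0:ℝ)..π, ff y) = 2 * π * Real.log 2 := by
  have hftc := intervalIntegral.integral_eq_sub_of_hasDeriv_right_of_le Real.pi_pos.le
    FF_cont (fun x hx => (FF_deriv hx).hasDerivWithinAt)
    (il_logonesubcos.add il_ff)
  rw [intervalIntegral.integral_add il_logonesubcos il_ff, integral_logonesubcos] at hftc
  have hFFπ : FF π = π * Real.log 2 := by
    simp [FF, Real.cos_pi]
    norm_num
  have hFF0 : FF 0 = 0 := by simp [FF]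
  rw [hFFπ, hFF0] at hftc
  linarith

/-- `π ∫₀^∞ dx/(e^x+1) = (1/2) ∫₀^π y sin y/(1 − cos y) dy`, and equivalently the latter
integral equals `2π log 2`. -/
theorem pi_mul_integral_eq :
    π * (∫ x in Set.Ioi (0 : ℝ), 1 / (Real.exp x + 1)) =
      (1 / 2) * (∫ y in (0 : ℝ)..π, y * Real.sin y / (1 - Real.cos y)) ∧
    (∫ y in (0 : ℝ)..π, y * Real.sin y / (1 - Real.cos y)) = 2 * π * Real.log 2 := by
  have h2 : (∫ y in (0 : ℝ)..π, y * Real.sin y / (1 - Real.cos y)) = 2 * π * Real.log 2 := by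
    have := integral_ff
    simp only [ff] at this
    exact this
  refine ⟨?_, h2⟩
  rw [exp_integral, h2]
  ring
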